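/- On a probability space, let z^a, v^a, z^b, v^b, u^b be real square-integrable random variables with z^a independent of v^a and z^b independent of the pair (v^b, u^b). Let γ, β₀ ∈ ℝ with γ ≠ 0 and Var(z^a) ≠ 0, and define x^a = γ z^a + v^a, x^b = γ z^b + v^b, y^b = β₀ x^b + u^b. Then Cov(z^a, x^a) = γ Var(z^a) ≠ 0 and Cov(z^b, y^b)/Cov(z^a, x^a) = β₀ · Var(z^b)/Var(z^a). -/

import Mathlib

open MeasureTheory ProbabilityTheory

/-- Covariance of two real random variables. -/
noncomputable def cov {Ωs : Type*} [MeasurableSpace Ωs] (μ : Measure Ωs)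
    (X Y : Ωs → ℝ) : ℝ :=
  ∫ ω, (X ω - ∫ ω', X ω' ∂μ) * (Y ω - ∫ ω', Y ω' ∂μ) ∂μ

lemma memLp_mul' {Ω : Type*} [MeasurableSpace Ω] {μ : Measure Ω}
    {X Y : Ω → ℝ} (hX : MemLp X 2 μ) (hY : MemLp Y 2 μ) :
    Integrable (fun ω => X ω * Y ω) μ := by
  have h : MemLp (X • Y) 1 μ := hY.smul hX (hpqr := ⟨by simp [ENNReal.inv_two_add_inv_two]⟩)
  exact memLp_one_iff_integrable.mp h

lemma cov_eq {Ω : Type*} [MeasurableSpace Ω] (μ : Measure Ω) [IsProbabilityMeasure μ]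
    {X Y : Ω → ℝ} (hX : MemLp X 2 μ) (hY : MemLp Y 2 μ) :
    cov μ X Y = (∫ ω, X ω * Y ω ∂μ) - (∫ ω, X ω ∂μ) * (∫ ω, Y ω ∂μ) := by
  have hXi := hX.integrable (by norm_num)
  have hYi := hY.integrable (by norm_num)
  have hXY := memLp_mul' hX hY
  unfold cov
  set a := ∫ ω, X ω ∂μ with ha
  set b := ∫ ω, Y ω ∂μ with hb
  have h : ∀ ω, (X ω - a) * (Y ω - b) = X ω * Y ω - a * Y ω - b * X ω + a * b := by
    intro ω; ring
  simp_rw [h]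
  have i1 : Integrable (fun ω => a * Y ω) μ := hYi.const_mul a
  have i2 : Integrable (fun ω => b * X ω) μ := hXi.const_mul b
  have i3 : Integrable (fun ω => X ω * Y ω - a * Y ω) μ := hXY.sub i1
  have i4 : Integrable (fun ω => X ω * Y ω - a * Y ω - b * X ω) μ := i3.sub i2
  rw [integral_add i4 (integrable_const _), integral_sub i3 i2, integral_sub hXY i1,
    integral_const_mul, integral_const_mul, integral_const]
  simp [← ha, ← hb]
  ring

lemma cov_indep {Ω : Type*} [MeasurableSpace Ω] (μ : Measure Ω) [IsProbabilityMeasure μ]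
    {X Y : Ω → ℝ} (hX : MemLp X 2 μ) (hY : MemLp Y 2 μ) (h : IndepFun X Y μ) :
    cov μ X Y = 0 := by
  rw [cov_eq μ hX hY,
    h.integral_fun_mul_eq_mul_integral hX.aestronglyMeasurable hY.aestronglyMeasurable, sub_self]

lemma cov_add_right {Ω : Type*} [MeasurableSpace Ω] (μ : Measure Ω) [IsProbabilityMeasure μ]
    {X Y Z : Ω → ℝ} (hX : MemLp X 2 μ) (hY : MemLp Y 2 μ) (hZ : MemLp Z 2 μ) (c : ℝ) :
    cov μ X (fun ω => c * Y ω + Z ω) = c * cov μ X Y + cov μ X Z := by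
  have hXi := hX.integrable (by norm_num)
  have hYi := hY.integrable (by norm_num)
  have hZi := hZ.integrable (by norm_num)
  have hXY := memLp_mul' hX hY
  have hXZ := memLp_mul' hX hZ
  have hcYZ : MemLp (fun ω => c * Y ω + Z ω) 2 μ := (hY.const_mul c).add hZ
  rw [cov_eq μ hX hcYZ, cov_eq μ hX hY, cov_eq μ hX hZ]
  have h1 : ∀ ω, X ω * (c * Y ω + Z ω) = c * (X ω * Y ω) + X ω * Z ω := by intro ω; ring
  simp_rw [h1]
  have j1 : Integrable (fun ω => c * (X ω * Y ω)) μ := hXY.const_mul c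
  have j2 : Integrable (fun ω => c * Y ω) μ := hYi.const_mul c
  rw [integral_add j1 hXZ, integral_add j2 hZi, integral_const_mul, integral_const_mul]
  ring

/-- Population limit of the two-sample covariance (TSCOV) estimator
with one instrument: `Cov(z^a, x^a) = γ·Var(z^a) ≠ 0` and
`Cov(z^b, y^b)/Cov(z^a, x^a) = β₀·Var(z^b)/Var(z^a)`. -/
theorem tscov_population_limit
    {Ωs : Type*} [MeasurableSpace Ωs] (μ : Measure Ωs) [IsProbabilityMeasure μ]
    (za va zb vb ub : Ωs → ℝ)
    (hza2 : MemLp za 2 μ) (hva2 : MemLp va 2 μ)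
    (hzb2 : MemLp zb 2 μ) (hvb2 : MemLp vb 2 μ) (hub2 : MemLp ub 2 μ)
    (hindepa : IndepFun za va μ)
    (hindepb : IndepFun zb (fun ω => (vb ω, ub ω)) μ)
    (γ β₀ : ℝ) (hγ : γ ≠ 0) (hvarza : cov μ za za ≠ 0)
    (xa : Ωs → ℝ) (hxa : xa = fun ω => γ * za ω + va ω)
    (xb : Ωs → ℝ) (hxb : xb = fun ω => γ * zb ω + vb ω)
    (yb : Ωs → ℝ) (hyb : yb = fun ω => β₀ * xb ω + ub ω) :
    cov μ za xa = γ * cov μ za za ∧ cov μ za xa ≠ 0 ∧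
      cov μ zb yb / cov μ za xa = β₀ * (cov μ zb zb / cov μ za za) := by
  have hzbvb : IndepFun zb vb μ := hindepb.comp measurable_id measurable_fst
  have hzbub : IndepFun zb ub μ := hindepb.comp measurable_id measurable_snd
  have hxb2 : MemLp xb 2 μ := by rw [hxb]; exact (hzb2.const_mul γ).add hvb2
  have h1 : cov μ za xa = γ * cov μ za za := by
    rw [hxa, cov_add_right μ hza2 hza2 hva2 γ, cov_indep μ hza2 hva2 hindepa, add_zero]
  have h2 : cov μ zb xb = γ * cov μ zb zb := by
    rw [hxb, cov_add_right μ hzb2 hzb2 hvb2 γ, cov_indep μ hzb2 hvb2 hzbvb, add_zero]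
  have h3 : cov μ zb yb = β₀ * γ * cov μ zb zb := by
    rw [hyb, cov_add_right μ hzb2 hxb2 hub2 β₀, cov_indep μ hzb2 hub2 hzbub, add_zero, h2]
    ring
  have h4 : cov μ za xa ≠ 0 := by rw [h1]; exact mul_ne_zero hγ hvarza
  refine ⟨h1, h4, ?_⟩
  rw [h3, h1]
  field_simp
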